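/- In the ridge fixed-point setting with λ > 0, fix 0 < φ ≤ θ < ∞ and ρ², σ² ≥ 0. For M ∈ ℕ define B_M = (1/M)·B(θ, θ) + (1 − 1/M)·B(φ, θ) and V_M = (1/M)·V(θ, θ) + (1 − 1/M)·V(φ, θ), and set B_∞ = B(φ, θ), V_∞ = V(φ, θ). Then for every M ∈ ℕ: B_∞ ≤ B_{M+1} ≤ B_M and V_∞ ≤ V_{M+1} ≤ V_M; the inequalities between B's are strict whenever ρ² > 0 and φ < θ, and the inequalities between V's are strict whenever σ² > 0 and φ < θ. Consequently the limiting risk σ² + B_M + V_M of the subagged ridge predictor is non-increasing in the number of bags M. (Improvement due to subagging: monotonicity of the asymptotic bias and variance in the number of bags.) -/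
import Mathlib
set_option maxHeartbeats 800000
open MeasureTheory Set

lemma aux_int {μ : Measure ℝ} [IsProbabilityMeasure μ] {a b C : ℝ} {f : ℝ → ℝ}
    (hm : AEStronglyMeasurable f μ) (hsupp : ∀ᵐ r ∂μ, r ∈ Icc a b)
    (hb : ∀ r ∈ Icc a b, |f r| ≤ C) : Integrable f μ := by
  refine Integrable.mono' (integrable_const C) hm ?_
  filter_upwards [hsupp] with r hr
  simpa using hb r hr

lemma aux_lb {μ : Measure ℝ} [IsProbabilityMeasure μ] {a b c : ℝ} {f : ℝ → ℝ}
    (hf : Integrable f μ) (hsupp : ∀ᵐ r ∂μ, r ∈ Icc a b)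
    (hb : ∀ r ∈ Icc a b, c ≤ f r) : c ≤ ∫ r, f r ∂μ := by
  have h : ∫ _, (c:ℝ) ∂μ ≤ ∫ r, f r ∂μ := by
    apply integral_mono_ae (integrable_const c) hf
    filter_upwards [hsupp] with r hr using hb r hr
  simpa using h

lemma bag_mono {X Y : ℝ} (hXY : X ≤ Y) (F : ℕ → ℝ)
    (hF : ∀ M : ℕ, F M = (1 / (M : ℝ)) * Y + (1 - 1 / (M : ℝ)) * X)
    (M : ℕ) (hM : 1 ≤ M) : X ≤ F (M + 1) ∧ F (M + 1) ≤ F M := by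
  have hm : (1:ℝ) ≤ (M:ℝ) := by exact_mod_cast hM
  have hm0 : (0:ℝ) < (M:ℝ) := by linarith
  have hm1 : (0:ℝ) < (M:ℝ) + 1 := by linarith
  have h12 : 1/((M:ℝ)+1) ≤ 1/(M:ℝ) := by
    apply one_div_le_one_div_of_le hm0; linarith
  have h0 : (0:ℝ) < 1/((M:ℝ)+1) := by positivity
  constructor
  · rw [hF]; push_cast
    nlinarith [mul_nonneg h0.le (sub_nonneg.mpr hXY)]
  · rw [hF, hF]; push_cast
    nlinarith [mul_nonneg (sub_nonneg.mpr h12) (sub_nonneg.mpr hXY)]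

lemma bag_mono_strict {X Y : ℝ} (hXY : X < Y) (F : ℕ → ℝ)
    (hF : ∀ M : ℕ, F M = (1 / (M : ℝ)) * Y + (1 - 1 / (M : ℝ)) * X)
    (M : ℕ) (hM : 1 ≤ M) : X < F (M + 1) ∧ F (M + 1) < F M := by
  have hm : (1:ℝ) ≤ (M:ℝ) := by exact_mod_cast hM
  have hm0 : (0:ℝ) < (M:ℝ) := by linarith
  have h12 : 1/((M:ℝ)+1) < 1/(M:ℝ) := by
    apply one_div_lt_one_div_of_lt hm0; linarith
  have h0 : (0:ℝ) < 1/((M:ℝ)+1) := by positivity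
  constructor
  · rw [hF]; push_cast
    nlinarith [mul_pos h0 (sub_pos.mpr hXY)]
  · rw [hF, hF]; push_cast
    nlinarith [mul_pos (sub_pos.mpr h12) (sub_pos.mpr hXY)]

theorem subagging_bias_variance_monotone_in_bags
    (a b : ℝ) (ha : 0 < a) (hab : a ≤ b)
    (H G : Measure ℝ) [IsProbabilityMeasure H] [IsProbabilityMeasure G]
    (hHsupp : ∀ᵐ r ∂H, r ∈ Icc a b) (hGsupp : ∀ᵐ r ∂G, r ∈ Icc a b)
    (lam : ℝ) (hlam : 0 < lam)
    (v J tc : ℝ → ℝ) (tv B V : ℝ → ℝ → ℝ)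
    (hv : ∀ θ : ℝ, 0 < θ →
      0 < v θ ∧ 1 / v θ = lam + θ * ∫ r, r / (1 + v θ * r) ∂H)
    (hJ : ∀ θ : ℝ, J θ = ∫ r, r ^ 2 / (1 + v θ * r) ^ 2 ∂H)
    (htc : ∀ θ : ℝ, tc θ = ∫ r, r / (1 + v θ * r) ^ 2 ∂G)
    (htv : ∀ ϑ θ : ℝ, tv ϑ θ = ϑ * J θ / ((1 / v θ) ^ 2 - ϑ * J θ))
    (ρ2 σ2 : ℝ) (hρ2 : 0 ≤ ρ2) (hσ2 : 0 ≤ σ2)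
    (hB : ∀ ϑ θ : ℝ, B ϑ θ = ρ2 * (1 + tv ϑ θ) * tc θ)
    (hV : ∀ ϑ θ : ℝ, V ϑ θ = σ2 * tv ϑ θ)
    (φ θ : ℝ) (hφ : 0 < φ) (hφθ : φ ≤ θ)
    (BM VM : ℕ → ℝ)
    (hBM : ∀ M : ℕ, BM M = (1 / (M : ℝ)) * B θ θ + (1 - 1 / (M : ℝ)) * B φ θ)
    (hVM : ∀ M : ℕ, VM M = (1 / (M : ℝ)) * V θ θ + (1 - 1 / (M : ℝ)) * V φ θ) :
    (∀ M : ℕ, 1 ≤ M →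
      B φ θ ≤ BM (M + 1) ∧ BM (M + 1) ≤ BM M
        ∧ V φ θ ≤ VM (M + 1) ∧ VM (M + 1) ≤ VM M)
    ∧ (0 < ρ2 → φ < θ → ∀ M : ℕ, 1 ≤ M →
        B φ θ < BM (M + 1) ∧ BM (M + 1) < BM M)
    ∧ (0 < σ2 → φ < θ → ∀ M : ℕ, 1 ≤ M →
        V φ θ < VM (M + 1) ∧ VM (M + 1) < VM M)
    ∧ (∀ M : ℕ, 1 ≤ M →
        σ2 + BM (M + 1) + VM (M + 1) ≤ σ2 + BM M + VM M) := by
  have hθ : 0 < θ := lt_of_lt_of_le hφ hφθ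
  obtain ⟨hv0, hfix⟩ := hv θ hθ
  set v0 := v θ with hv0def
  have hb : 0 < b := lt_of_lt_of_le ha hab
  have hpos : ∀ r ∈ Icc a b, 0 < r ∧ (0:ℝ) < 1 + v0 * r ∧ 1 + v0 * r ≤ 1 + v0 * b := by
    intro r hr
    obtain ⟨h1, h2⟩ := hr
    have hr0 : 0 < r := lt_of_lt_of_le ha h1
    refine ⟨hr0, by nlinarith, by nlinarith⟩
  -- measurability
  have hmd : Measurable (fun r : ℝ => 1 + v0 * r) :=
    (measurable_const.mul measurable_id).const_add 1
  have hm1 : AEStronglyMeasurable (fun r : ℝ => r / (1 + v0 * r)) H :=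
    (measurable_id.div hmd).aestronglyMeasurable
  have hm2 : AEStronglyMeasurable (fun r : ℝ => r ^ 2 / (1 + v0 * r) ^ 2) H :=
    ((measurable_id.pow_const 2).div (hmd.pow_const 2)).aestronglyMeasurable
  have hm4 : AEStronglyMeasurable (fun r : ℝ => r / (1 + v0 * r) ^ 2) G :=
    (measurable_id.div (hmd.pow_const 2)).aestronglyMeasurable
  -- integrability
  have hi1 : Integrable (fun r : ℝ => r / (1 + v0 * r)) H := by
    refine aux_int (C := b) hm1 hHsupp ?_
    intro r hr
    obtain ⟨hr0, hd, _⟩ := hpos r hr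
    rw [abs_of_nonneg (by positivity), div_le_iff₀ hd]
    nlinarith [hr.2, mul_pos hb (mul_pos hv0 hr0)]
  have hi2 : Integrable (fun r : ℝ => r ^ 2 / (1 + v0 * r) ^ 2) H := by
    refine aux_int (C := b ^ 2) hm2 hHsupp ?_
    intro r hr
    obtain ⟨hr0, hd, _⟩ := hpos r hr
    rw [abs_of_nonneg (by positivity), div_le_iff₀ (by positivity)]
    have h1 : r ^ 2 ≤ b ^ 2 := by nlinarith [hr.2]
    have h2 : (1:ℝ) ≤ (1 + v0 * r) ^ 2 := by nlinarith [mul_pos hv0 hr0]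
    nlinarith [mul_le_mul_of_nonneg_left h2 (sq_nonneg b)]
  have hi3 : Integrable (fun r : ℝ => r / (1 + v0 * r) / v0) H := hi1.div_const v0
  have hi4 : Integrable (fun r : ℝ => r / (1 + v0 * r) ^ 2) G := by
    refine aux_int (C := b) hm4 hGsupp ?_
    intro r hr
    obtain ⟨hr0, hd, _⟩ := hpos r hr
    rw [abs_of_nonneg (by positivity), div_le_iff₀ (by positivity)]
    have h2 : (1:ℝ) ≤ (1 + v0 * r) ^ 2 := by nlinarith [mul_pos hv0 hr0]
    nlinarith [mul_le_mul_of_nonneg_left h2 hb.le, hr.2]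
  -- positivity of J and tc
  have hJpos : 0 < J θ := by
    rw [hJ θ]
    have hc : (0:ℝ) < a ^ 2 / (1 + v0 * b) ^ 2 := by positivity
    refine lt_of_lt_of_le hc (aux_lb hi2 hHsupp ?_)
    intro r hr
    obtain ⟨hr0, hd, hdb⟩ := hpos r hr
    rw [div_le_div_iff₀ (by positivity) (by positivity)]
    nlinarith [hr.1, sq_nonneg (1 + v0 * r), mul_le_mul hr.1 hr.1 ha.le hr0.le,
      mul_le_mul hdb hdb hd.le (by positivity)]
  have htcpos : 0 < tc θ := by
    rw [htc θ]
    have hc : (0:ℝ) < a / (1 + v0 * b) ^ 2 := by positivity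
    refine lt_of_lt_of_le hc (aux_lb hi4 hGsupp ?_)
    intro r hr
    obtain ⟨hr0, hd, hdb⟩ := hpos r hr
    rw [div_le_div_iff₀ (by positivity) (by positivity)]
    nlinarith [hr.1, mul_le_mul hdb hdb hd.le (by positivity)]
  -- key bound: θ * J θ < (1 / v0)^2
  have hJle : J θ ≤ (∫ r, r / (1 + v0 * r) ∂H) / v0 := by
    rw [hJ θ, ← integral_div]
    refine integral_mono_ae hi2 hi3 ?_
    filter_upwards [hHsupp] with r hr
    obtain ⟨hr0, hd, _⟩ := hpos r hr
    rw [div_div, div_le_div_iff₀ (by positivity) (by positivity)]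
    nlinarith [mul_pos hr0 hd, mul_pos hv0 hr0]
  have hDpos : θ * J θ < (1 / v0) ^ 2 := by
    set I1 := ∫ r, r / (1 + v0 * r) ∂H with hI1
    have hu : (0:ℝ) < 1 / v0 := by positivity
    have h2 : (1 / v0) ^ 2 = (1 / v0) * lam + (1 / v0) * (θ * I1) := by
      rw [sq]; nlinarith [hfix]
    have h3 : θ * J θ ≤ θ * (I1 / v0) := by
      apply mul_le_mul_of_nonneg_left hJle hθ.le
    have h4 : θ * (I1 / v0) = (1 / v0) * (θ * I1) := by ring
    nlinarith [mul_pos hu hlam]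
  -- tv facts
  have hden_pos : ∀ ϑ : ℝ, 0 ≤ ϑ → ϑ ≤ θ → 0 < (1 / v0) ^ 2 - ϑ * J θ := by
    intro ϑ h0 h1
    have : ϑ * J θ ≤ θ * J θ := mul_le_mul_of_nonneg_right h1 hJpos.le
    linarith
  have hdφ := hden_pos φ hφ.le hφθ
  have hdθ := hden_pos θ hθ.le le_rfl
  have htvφ0 : 0 ≤ tv φ θ := by
    rw [htv]
    exact div_nonneg (by positivity) hdφ.le
  have htvle : tv φ θ ≤ tv θ θ := by
    rw [htv, htv, div_le_div_iff₀ hdφ hdθ]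
    have h1 : φ * J θ ≤ θ * J θ := mul_le_mul_of_nonneg_right hφθ hJpos.le
    nlinarith [sq_nonneg (1 / v0), mul_le_mul_of_nonneg_right h1 (sq_nonneg (1 / v0))]
  have htvlt : φ < θ → tv φ θ < tv θ θ := by
    intro hlt
    rw [htv, htv, div_lt_div_iff₀ hdφ hdθ]
    have h1 : φ * J θ < θ * J θ := by
      exact mul_lt_mul_of_pos_right hlt hJpos
    nlinarith [mul_lt_mul_of_pos_right h1 (by positivity : (0:ℝ) < (1 / v0) ^ 2)]
  -- B, V comparisons
  have hBle : B φ θ ≤ B θ θ := by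
    rw [hB, hB]
    nlinarith [mul_nonneg (mul_nonneg hρ2 htcpos.le) (sub_nonneg.mpr htvle)]
  have hVle : V φ θ ≤ V θ θ := by
    rw [hV, hV]
    exact mul_le_mul_of_nonneg_left htvle hσ2
  refine ⟨?_, ?_, ?_, ?_⟩
  · intro M hM
    obtain ⟨hb1, hb2⟩ := bag_mono hBle BM hBM M hM
    obtain ⟨hv1, hv2⟩ := bag_mono hVle VM hVM M hM
    exact ⟨hb1, hb2, hv1, hv2⟩
  · intro hρ hlt M hM
    have hBlt : B φ θ < B θ θ := by
      rw [hB, hB]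
      nlinarith [mul_pos (mul_pos hρ htcpos) (sub_pos.mpr (htvlt hlt))]
    exact bag_mono_strict hBlt BM hBM M hM
  · intro hσ hlt M hM
    have hVlt : V φ θ < V θ θ := by
      rw [hV, hV]
      exact mul_lt_mul_of_pos_left (htvlt hlt) hσ
    exact bag_mono_strict hVlt VM hVM M hM
  · intro M hM
    obtain ⟨_, hb2⟩ := bag_mono hBle BM hBM M hM
    obtain ⟨_, hv2⟩ := bag_mono hVle VM hVM M hM
    linarith
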